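/- (Diversity preservation of the heterogeneous aggregation, Lemma 5.) Let p^{(1)},…,p^{(n)} be probability distributions on a finite token vocabulary V and let L > 0. Consider the aggregation that generates frequencies c by coordinated sampling, samples a token j ∈ V with probability c_j/n (and ⊥ with the remaining probability 1 - Σ_j c_j/n = 0, i.e., samples a uniformly random teacher's token), outputs j if c_j ≥ 2L, and if c_j < 2L outputs either j or ⊥ according to an arbitrary (possibly randomized) rule. Then for every μ > 1: (1) for every token j ∈ V and q ∈ [0,1], if c_{j,q} ≥ 2μL then the probability that the aggregation outputs j is at least (ln(μ)/(2μ)) · (c_{j,q}/n) · q; and (2) for every token j ∈ V, the probability that the aggregation outputs j is at most (1/n) · Σ_{i∈[n]} p^{(i)}_j. -/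

import Mathlib

open MeasureTheory ProbabilityTheory

/-- `p` is a probability distribution (vector) on the finite token vocabulary `V`. -/
def IsProbVec {V : Type*} [Fintype V] (p : V → ℝ) : Prop :=
  (∀ j, 0 ≤ p j) ∧ ∑ j, p j = 1

/-- The measure on the shared randomness `ρ = (u_j)_{j ∈ V}`:
i.i.d. rate-1 exponential random variables, one per token. -/
noncomputable def sharedMeasure (V : Type*) [Fintype V] : Measure (V → ℝ) :=
  Measure.pi fun _ => expMeasure 1

/-- A coordinated sample: a token maximizing `p j / u j` over `j ∈ V`
(an arbitrary maximizer in case of ties, which happen with probability zero). -/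
noncomputable def coordSample {V : Type*} [Fintype V] [Nonempty V] (p : V → ℝ) (u : V → ℝ) : V :=
  (Finset.exists_max_image Finset.univ (fun j => p j / u j) Finset.univ_nonempty).choose

/-- The frequency `c_j = #{i ∈ [n] : y_i = j}` of token `j` among the coordinated
samples `y_i = coordSample (p i) u` of the `n` teachers. -/
noncomputable def freq {V : Type*} [Fintype V] [Nonempty V] [DecidableEq V] {n : ℕ}
    (p : Fin n → V → ℝ) (u : V → ℝ) (j : V) : ℕ :=
  (Finset.univ.filter fun i : Fin n => coordSample (p i) u = j).card

/-! ### Auxiliary material -/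

open Real Set
open scoped ENNReal

namespace HetDiv

instance : IsProbabilityMeasure (expMeasure 1) := isProbabilityMeasure_expMeasure one_pos

section Basic
variable {V : Type*} [Fintype V] [Nonempty V]

lemma coordSample_spec (p u : V → ℝ) (k : V) :
    p k / u k ≤ p (coordSample p u) / u (coordSample p u) :=
  (Finset.exists_max_image Finset.univ (fun j => p j / u j)
    Finset.univ_nonempty).choose_spec.2 k (Finset.mem_univ k)

lemma coordSample_eq {p u : V → ℝ} {j : V}
    (h : ∀ k, k ≠ j → p k / u k < p j / u j) : coordSample p u = j := by
  by_contra hne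
  exact absurd (coordSample_spec p u j) (not_le.mpr (h _ hne))

end Basic

lemma expMeasure_eq_withDensity : expMeasure 1 = volume.withDensity (exponentialPDF 1) := rfl

lemma measurable_exponentialPDF : Measurable (exponentialPDF 1) :=
  (measurable_exponentialPDFReal 1).ennreal_ofReal

lemma expMeasure_Ioi {a : ℝ} (ha : 0 ≤ a) : expMeasure 1 (Ioi a) = ENNReal.ofReal (exp (-a)) := by
  rw [expMeasure_eq_withDensity, withDensity_apply _ measurableSet_Ioi]
  have h1 : ∀ x ∈ Ioi a, exponentialPDF 1 x = ENNReal.ofReal (exp (-x)) := by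
    intro x hx
    rw [exponentialPDF_of_nonneg (le_trans ha (le_of_lt hx))]
    norm_num
  rw [setLIntegral_congr_fun measurableSet_Ioi h1]
  rw [← ofReal_integral_eq_lintegral_ofReal]
  · rw [integral_exp_neg_Ioi]
  · exact (by simpa using exp_neg_integrableOn_Ioi a one_pos : IntegrableOn (fun x => exp (-x)) (Ioi a))
  · exact Filter.Eventually.of_forall fun x => (exp_pos _).le

lemma expMeasure_Iic_zero : expMeasure 1 (Iic 0) = 0 := by
  have : (Iic (0:ℝ)) = Iio 0 ∪ {0} := by
    ext x; simp [le_iff_lt_or_eq]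
  rw [this]
  refine le_antisymm (le_trans (measure_union_le _ _) ?_) zero_le
  have h1 : expMeasure 1 (Iio 0) = 0 := by
    rw [expMeasure_eq_withDensity, withDensity_apply _ measurableSet_Iio]
    exact lintegral_exponentialPDF_of_nonpos le_rfl
  have h2 : expMeasure 1 {(0:ℝ)} = 0 :=
    (withDensity_absolutelyContinuous volume _) (volume_singleton)
  simp [h1, h2]

lemma expMeasure_Ici {a : ℝ} (ha : 0 ≤ a) : expMeasure 1 (Ici a) ≤ ENNReal.ofReal (exp (-a)) := by
  have : (Ici a) = {a} ∪ Ioi a := by ext x; simp [le_iff_lt_or_eq, eq_comm, or_comm]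
  rw [this]
  refine le_trans (measure_union_le _ _) ?_
  have h2 : expMeasure 1 {a} = 0 :=
    (withDensity_absolutelyContinuous volume _) (volume_singleton)
  simp [h2, expMeasure_Ioi ha]

lemma integral_exp_neg_mul (a c : ℝ) (ha : a ≠ 0) :
    ∫ t in (0:ℝ)..c, exp (-(a * t)) = (1 - exp (-(a * c))) / a := by
  have h : ∀ t : ℝ, exp (-(a * t)) = exp ((-a) * t) := by intro t; ring_nf
  simp_rw [h]
  rw [intervalIntegral.integral_comp_mul_left (fun x => exp x) (neg_ne_zero.mpr ha)]
  simp [integral_exp]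
  rw [eq_div_iff ha]
  field_simp
  ring

section Split
variable {V : Type*} [Fintype V] [DecidableEq V] (j : V)

noncomputable abbrev restMeasure : Measure ({k : V // ¬ k = j} → ℝ) :=
  Measure.pi fun _ => expMeasure 1

lemma measurePreserving_split :
    MeasurePreserving (fun u : V → ℝ => (u j, fun k : {k : V // ¬ k = j} => u k.1))
      (sharedMeasure V) ((expMeasure 1).prod (restMeasure j)) := by
  have h2 : MeasurePreserving
      (Prod.map (MeasurableEquiv.funUnique {k : V // k = j} ℝ) (id : ({k : V // ¬ k = j} → ℝ) → _))
      ((Measure.pi fun _ : {k : V // k = j} => expMeasure 1).prod (restMeasure j))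
      ((expMeasure 1).prod (restMeasure j)) :=
    (measurePreserving_funUnique (expMeasure 1) _).prod (MeasurePreserving.id _)
  have h1 : MeasurePreserving
      (MeasurableEquiv.piEquivPiSubtypeProd (fun _ : V => ℝ) (fun k => k = j))
      (sharedMeasure V)
      ((Measure.pi fun _ : {k : V // k = j} => expMeasure 1).prod (restMeasure j)) := by
    convert measurePreserving_piEquivPiSubtypeProd (fun _ : V => expMeasure 1) (fun k => k = j)
      using 2
    congr!
    exact congrArg (fun inst => @Measure.pi _ _ inst _ _) (Subsingleton.elim _ _)
  exact h2.comp h1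

end Split

section Count
variable {α : Type*} [MeasurableSpace α] (mπ : Measure α) {ι : Type*} (F : Finset ι)
  (E : ι → Set α) {D : Set α}

lemma sum_measure_inter_eq (hE : ∀ i ∈ F, MeasurableSet (E i)) (hD : MeasurableSet D) :
    ∑ i ∈ F, mπ (E i ∩ D) = ∫⁻ w in D, (∑ i ∈ F, (E i).indicator (fun _ => (1:ℝ≥0∞)) w) ∂mπ := by
  rw [lintegral_finset_sum]
  · refine Finset.sum_congr rfl fun i hi => ?_
    have : ∫⁻ w in D, (E i).indicator (fun _ => (1:ℝ≥0∞)) w ∂mπ = (mπ.restrict D) (E i) := by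
      simpa [Pi.one_def] using lintegral_indicator_one (μ := mπ.restrict D) (hE i hi)
    rw [this, Measure.restrict_apply (hE i hi)]
  · exact fun i hi => (measurable_const.indicator (hE i hi))

lemma sum_measure_inter_le (hE : ∀ i ∈ F, MeasurableSet (E i)) (hD : MeasurableSet D)
    (r : ℝ≥0∞)
    (h : ∀ w ∈ D, (∑ i ∈ F, (E i).indicator (fun _ => (1:ℝ≥0∞)) w) ≤ r) :
    ∑ i ∈ F, mπ (E i ∩ D) ≤ r * mπ D := by
  rw [sum_measure_inter_eq mπ F E hE hD, ← setLIntegral_const]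
  exact setLIntegral_mono measurable_const h

lemma le_sum_measure_inter (hE : ∀ i ∈ F, MeasurableSet (E i)) (hD : MeasurableSet D)
    (r : ℝ≥0∞)
    (h : ∀ w ∈ D, r ≤ (∑ i ∈ F, (E i).indicator (fun _ => (1:ℝ≥0∞)) w)) :
    r * mπ D ≤ ∑ i ∈ F, mπ (E i ∩ D) := by
  rw [sum_measure_inter_eq mπ F E hE hD, ← setLIntegral_const]
  exact setLIntegral_mono
    (Finset.measurable_sum _ fun i _ => measurable_const.indicator (hE i ‹_›)) h

omit [MeasurableSpace α] in
lemma indicator_sum_ofReal (w : α) :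
    (∑ i ∈ F, (E i).indicator (fun _ => (1:ℝ≥0∞)) w)
      = ENNReal.ofReal (∑ i ∈ F, (E i).indicator (fun _ => (1:ℝ)) w) := by
  rw [ENNReal.ofReal_sum_of_nonneg (fun i _ => Set.indicator_nonneg (fun _ _ => zero_le_one) w)]
  refine Finset.sum_congr rfl fun i _ => ?_
  by_cases h : w ∈ E i <;> simp [h]

end Count

end HetDiv

open HetDiv

set_option maxHeartbeats 2000000 in
theorem heterogeneous_diversity_preserving {V : Type*} [Fintype V] [Nonempty V] [DecidableEq V]
    {n : ℕ} (hn : 0 < n)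
    (p : Fin n → V → ℝ) (hp : ∀ i, IsProbVec (p i))
    (L : ℝ) (hL : 0 < L)
    {Ω : Type*} [MeasurableSpace Ω] (ν : Measure Ω) [IsProbabilityMeasure ν]
    (rule : (V → ℕ) → V → Ω → Option V)
    (hrule : ∀ c j ω, rule c j ω = some j ∨ rule c j ω = none)
    (μ : ℝ) (hμ : 1 < μ) :
    (∀ (j : V) (q : ℝ), 0 ≤ q → q ≤ 1 →
      2 * μ * L ≤ ((Finset.univ.filter fun i : Fin n => q ≤ p i j).card : ℝ) →
      ((sharedMeasure V).prod
          (((@PMF.uniformOfFintype (Fin n) _ (Fin.pos_iff_nonempty.mp hn)).toMeasure).prod ν))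
          {x : (V → ℝ) × (Fin n) × Ω |
            (if 2 * L ≤ ((freq p x.1 (coordSample (p x.2.1) x.1) : ℝ)) then
                some (coordSample (p x.2.1) x.1)
              else rule (freq p x.1) (coordSample (p x.2.1) x.1) x.2.2) = some j}
        ≥ ENNReal.ofReal (Real.log μ / (2 * μ) *
            (((Finset.univ.filter fun i : Fin n => q ≤ p i j).card : ℝ) / n) * q)) ∧
    (∀ j : V,
      ((sharedMeasure V).prod
          (((@PMF.uniformOfFintype (Fin n) _ (Fin.pos_iff_nonempty.mp hn)).toMeasure).prod ν))
          {x : (V → ℝ) × (Fin n) × Ω |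
            (if 2 * L ≤ ((freq p x.1 (coordSample (p x.2.1) x.1) : ℝ)) then
                some (coordSample (p x.2.1) x.1)
              else rule (freq p x.1) (coordSample (p x.2.1) x.1) x.2.2) = some j}
        ≤ ENNReal.ofReal (1 / n * ∑ i, p i j)) := by
  classical
  haveI : Nonempty (Fin n) := Fin.pos_iff_nonempty.mp hn
  set τ : Measure (Fin n × Ω) :=
    ((@PMF.uniformOfFintype (Fin n) _ (Fin.pos_iff_nonempty.mp hn)).toMeasure).prod ν with hτ
  have hτsingle : ∀ i : Fin n, τ ({i} ×ˢ (univ : Set Ω)) = (n : ℝ≥0∞)⁻¹ := by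
    intro i
    rw [hτ, Measure.prod_prod, measure_univ, mul_one,
      PMF.toMeasure_apply_singleton _ _ (measurableSet_singleton i),
      PMF.uniformOfFintype_apply, Fintype.card_fin]
  constructor
  · -- Part (1)
    intro j q hq0 hq1 hm
    set S : Finset (Fin n) := Finset.univ.filter (fun i => q ≤ p i j) with hSdef
    set m : ℝ := (S.card : ℝ) with hmdef
    rcases eq_or_lt_of_le hq0 with hq | hq
    · rw [← hq]
      simp
    have hμ0 : (0:ℝ) < μ := by linarith
    have hμ1 : (0:ℝ) < μ - 1 := by linarith
    have hlogμ : 0 < Real.log μ := Real.log_pos hμ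
    set c : ℝ := q * Real.log μ with hcdef
    have hc : 0 < c := mul_pos hq hlogμ
    have hm0 : (0:ℝ) < m := by nlinarith
    have hm2L : 2 * L < m := by nlinarith
    have hm2L' : (0:ℝ) < m - 2 * L := by linarith
    have hpj1 : ∀ i : Fin n, p i j ≤ 1 := by
      intro i
      have := Finset.single_le_sum (f := p i) (fun k _ => (hp i).1 k) (Finset.mem_univ j)
      linarith [(hp i).2]
    set φ : (V → ℝ) → ℝ × ({k : V // ¬ k = j} → ℝ) :=
      fun u => (u j, fun k => u k.1) with hφ
    set Win : Fin n → Set (ℝ × ({k : V // ¬ k = j} → ℝ)) :=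
      fun i' => {x | ∀ k : {k : V // ¬ k = j}, x.1 * p i' k.1 < q * x.2 k} with hWin
    have hWinMeas : ∀ i', MeasurableSet (Win i') := by
      intro i'
      have hrw : Win i' = ⋂ k : {k : V // ¬ k = j},
          {x : ℝ × ({k : V // ¬ k = j} → ℝ) | x.1 * p i' k.1 < q * x.2 k} := by
        ext x; simp [hWin, Set.mem_iInter]
      rw [hrw]
      exact MeasurableSet.iInter fun k => measurableSet_lt
        (measurable_fst.mul_const _)
        (((measurable_pi_apply k).comp measurable_snd).const_mul _)
    set Ncnt : ℝ × ({k : V // ¬ k = j} → ℝ) → ℝ :=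
      fun x => ∑ i' ∈ S, (Win i').indicator (fun _ => (1:ℝ)) x with hNcnt
    have hNmeas : Measurable Ncnt :=
      Finset.measurable_sum _ fun i' _ => measurable_const.indicator (hWinMeas i')
    set T : Fin n → Set (ℝ × ({k : V // ¬ k = j} → ℝ)) :=
      fun i => (({x | 0 < x.1} ∩ {x | x.1 ≤ c}) ∩ Win i) ∩ Ncnt ⁻¹' (Ici (2*L)) with hT
    have hTmeas : ∀ i, MeasurableSet (T i) := fun i =>
      (((measurableSet_lt measurable_const measurable_fst).inter
        (measurableSet_le measurable_fst measurable_const)).inter (hWinMeas i)).inter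
        (hNmeas measurableSet_Ici)
    -- if a teacher with p i' j ≥ q wins at (t, w) = φ u with t > 0, it samples j
    have hkey : ∀ u : V → ℝ, 0 < u j → ∀ i' ∈ S, φ u ∈ Win i' →
        coordSample (p i') u = j := by
      intro u huj i' hi' hw
      apply coordSample_eq
      intro k hk
      have hq' : q ≤ p i' j := (Finset.mem_filter.mp hi').2
      have hlt : u j * p i' k < q * u k := hw ⟨k, hk⟩
      have h2 : p i' k / u k < q / u j := by
        rcases lt_trichotomy (u k) 0 with h | h | h
        · exact lt_of_le_of_lt
            (div_nonpos_of_nonneg_of_nonpos ((hp i').1 k) h.le) (div_pos hq huj)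
        · rw [h, div_zero]; exact div_pos hq huj
        · rw [div_lt_div_iff₀ h huj]; nlinarith
      refine lt_of_lt_of_le h2 ?_
      gcongr
    -- event inclusion
    have hBsub : (⋃ i ∈ S, ((φ ⁻¹' T i) ×ˢ ({i} ×ˢ (univ : Set Ω))))
        ⊆ {x : (V → ℝ) × (Fin n) × Ω |
            (if 2 * L ≤ ((freq p x.1 (coordSample (p x.2.1) x.1) : ℝ)) then
                some (coordSample (p x.2.1) x.1)
              else rule (freq p x.1) (coordSample (p x.2.1) x.1) x.2.2) = some j} := by
      rintro ⟨u, i2, ω⟩ hx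
      obtain ⟨i, hiS, hxmem⟩ := Set.mem_iUnion₂.mp hx
      obtain ⟨hA, hB, -⟩ := hxmem
      have hi2 : i2 = i := Set.mem_singleton_iff.mp hB
      subst hi2
      have hTu : φ u ∈ T i2 := hA
      obtain ⟨⟨⟨ht1, -⟩, hw⟩, hcnt⟩ := hTu
      have huj : 0 < u j := ht1
      have hcs : coordSample (p i2) u = j := hkey u huj i2 hiS hw
      have hNle : Ncnt (φ u) ≤ (freq p u j : ℝ) := by
        have hfreq_eq : (freq p u j : ℝ)
            = ∑ i' ∈ Finset.univ, (if coordSample (p i') u = j then (1:ℝ) else 0) := by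
          rw [freq, Finset.card_filter]
          push_cast
          rfl
        rw [hfreq_eq, hNcnt]
        calc ∑ i' ∈ S, (Win i').indicator (fun _ => (1:ℝ)) (φ u)
            ≤ ∑ i' ∈ S, (if coordSample (p i') u = j then (1:ℝ) else 0) := by
              refine Finset.sum_le_sum fun i' hi' => ?_
              by_cases hwm : φ u ∈ Win i'
              · rw [Set.indicator_of_mem hwm, if_pos (hkey u huj i' hi' hwm)]
              · rw [Set.indicator_of_notMem hwm]
                split_ifs <;> norm_num
          _ ≤ ∑ i' ∈ Finset.univ, (if coordSample (p i') u = j then (1:ℝ) else 0) := by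
              refine Finset.sum_le_sum_of_subset_of_nonneg (Finset.subset_univ S) ?_
              intro i' _ _
              split_ifs <;> norm_num
      have hfreqge : 2 * L ≤ ((freq p u j : ℕ) : ℝ) := le_trans hcnt hNle
      simp only [Set.mem_setOf_eq, hcs]
      rw [if_pos hfreqge]
    rw [ge_iff_le]
    refine le_trans ?_ (measure_mono hBsub)
    -- measure of the union
    have hdisj : (↑S : Set (Fin n)).PairwiseDisjoint
        (fun i => (φ ⁻¹' T i) ×ˢ ({i} ×ˢ (univ : Set Ω))) := by
      intro i _ i' _ hne
      simp only [Function.onFun]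
      rw [Set.disjoint_left]
      rintro ⟨u, i2, ω⟩ ⟨-, h2, -⟩ ⟨-, h2', -⟩
      exact hne ((Set.mem_singleton_iff.mp h2) ▸ (Set.mem_singleton_iff.mp h2'))
    have hφmeas : Measurable φ := (measurePreserving_split j).measurable
    have hmeasB : ∀ i ∈ S, MeasurableSet ((φ ⁻¹' T i) ×ˢ ({i} ×ˢ (univ : Set Ω))) :=
      fun i _ => ((hTmeas i).preimage hφmeas).prod
        ((measurableSet_singleton i).prod MeasurableSet.univ)
    rw [measure_biUnion_finset hdisj hmeasB]
    have hterm : ∀ i ∈ S, ((sharedMeasure V).prod τ) ((φ ⁻¹' T i) ×ˢ ({i} ×ˢ (univ : Set Ω)))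
        = ((expMeasure 1).prod (restMeasure j)) (T i) * (n : ℝ≥0∞)⁻¹ := by
      intro i _
      rw [Measure.prod_prod, hτsingle i,
        (measurePreserving_split j).measure_preimage (hTmeas i).nullMeasurableSet]
    rw [Finset.sum_congr rfl hterm, ← Finset.sum_mul]
    -- main estimate
    have hmain : ENNReal.ofReal (m * q * (μ - 1) / (2 * μ))
        ≤ ∑ i ∈ S, ((expMeasure 1).prod (restMeasure j)) (T i) := by
      have hfub : ∑ i ∈ S, ((expMeasure 1).prod (restMeasure j)) (T i)
          = ∫⁻ t, (∑ i ∈ S, (restMeasure j) (Prod.mk t ⁻¹' T i)) ∂(expMeasure 1) := by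
        rw [lintegral_finset_sum _ (fun i _ => measurable_measure_prodMk_left (hTmeas i))]
        exact Finset.sum_congr rfl fun i _ => Measure.prod_apply (hTmeas i)
      rw [hfub]
      set gbar : ℝ → ℝ := fun t => (m / (μ - 1)) * (μ * exp (-(t/q)) - 1) with hgbar
      -- sum over the non-j coordinates
      set σs : Fin n → ℝ := fun i => ∑ k : {k : V // ¬ k = j}, p i k.1 with hσs
      have hσs' : ∀ i, σs i = 1 - p i j := by
        intro i
        rw [hσs]
        simp only
        rw [← Finset.sum_subtype (Finset.univ.erase j)
          (by intro k; simp [Finset.mem_erase]) (fun k => p i k)]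
        have := Finset.add_sum_erase Finset.univ (p i) (Finset.mem_univ j)
        rw [(hp i).2] at this
        linarith
      -- pointwise slice bound
      have hslice : ∀ t : ℝ, (Ioc (0:ℝ) c).indicator (fun s => ENNReal.ofReal (gbar s)) t
          ≤ ∑ i ∈ S, (restMeasure j) (Prod.mk t ⁻¹' T i) := by
        intro t
        by_cases ht : t ∈ Ioc (0:ℝ) c
        case neg => rw [Set.indicator_of_notMem ht]; exact zero_le
        rw [Set.indicator_of_mem ht]
        obtain ⟨ht1, ht2⟩ := ht
        set Et : Fin n → Set ({k : V // ¬ k = j} → ℝ) :=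
          fun i => Prod.mk t ⁻¹' Win i with hEt
        have hEtMeas : ∀ i, MeasurableSet (Et i) :=
          fun i => (hWinMeas i).preimage measurable_prodMk_left
        set Dlt : Set ({k : V // ¬ k = j} → ℝ) := {w | Ncnt (t, w) < 2*L} with hDlt
        have hDltMeas : MeasurableSet Dlt :=
          measurableSet_lt (hNmeas.comp measurable_prodMk_left) measurable_const
        have hsliceEq : ∀ i, Prod.mk t ⁻¹' T i = Et i ∩ Dltᶜ := by
          intro i
          ext w
          simp only [Set.mem_preimage, hT, Set.mem_inter_iff, Set.mem_setOf_eq,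
            Set.mem_Ici, Set.mem_compl_iff, hDlt, hEt, not_lt]
          constructor
          · rintro ⟨⟨⟨-, -⟩, hw⟩, hcnt⟩; exact ⟨hw, hcnt⟩
          · rintro ⟨hw, hd⟩; exact ⟨⟨⟨ht1, ht2⟩, hw⟩, hd⟩
        have hEtVal : ∀ i, (restMeasure j) (Et i)
            = ENNReal.ofReal (exp (-(t/q) * σs i)) := by
          intro i
          have hbox : Et i = Set.pi univ
              (fun k : {k : V // ¬ k = j} => Ioi (t * p i k.1 / q)) := by
            ext w
            simp only [hEt, Set.mem_preimage, hWin, Set.mem_setOf_eq, Set.mem_pi,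
              Set.mem_univ, forall_const, Set.mem_Ioi]
            constructor
            · intro h k
              rw [div_lt_iff₀ hq]
              have := h k
              linarith [h k]
            · intro h k
              have := h k
              rw [div_lt_iff₀ hq] at this
              linarith
          rw [hbox, Measure.pi_pi]
          have hIoi : ∀ k : {k : V // ¬ k = j}, expMeasure 1 (Ioi (t * p i k.1 / q))
              = ENNReal.ofReal (exp (-(t * p i k.1 / q))) :=
            fun k => expMeasure_Ioi (div_nonneg (mul_nonneg ht1.le ((hp i).1 _)) hq.le)
          rw [Finset.prod_congr rfl (fun k _ => hIoi k),
            ← ENNReal.ofReal_prod_of_nonneg (fun k _ => (exp_pos _).le), ← Real.exp_sum]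
          congr 2
          rw [hσs]
          simp only
          rw [Finset.mul_sum]
          exact Finset.sum_congr rfl fun k _ => by ring
        -- basic real facts
        set z : ℝ := exp (-(t/q)) with hz
        have hz0 : 0 < z := exp_pos _
        have hz1 : z ≤ 1 := by
          rw [hz]
          calc exp (-(t/q)) ≤ exp 0 := by
                apply Real.exp_le_exp.mpr
                have : 0 ≤ t / q := div_nonneg ht1.le hq.le
                linarith
            _ = 1 := Real.exp_zero
        have hzμ : 1 ≤ μ * z := by
          have htq : t / q ≤ Real.log μ := by
            rw [div_le_iff₀ hq]
            rw [hcdef] at ht2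
            linarith
          have : exp (-(Real.log μ)) ≤ z := by
            rw [hz]
            exact Real.exp_le_exp.mpr (by linarith)
          rw [Real.exp_neg, Real.exp_log hμ0] at this
          have h3 := mul_le_mul_of_nonneg_left this hμ0.le
          rw [mul_inv_cancel₀ (ne_of_gt hμ0)] at h3
          exact h3
        have havb : ∀ i : Fin n, z ≤ exp (-(t/q) * σs i) ∧ exp (-(t/q) * σs i) ≤ 1 := by
          intro i
          have h1 : 0 ≤ σs i := by rw [hσs' i]; linarith [hpj1 i]
          have h2 : σs i ≤ 1 := by rw [hσs' i]; linarith [(hp i).1 j]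
          have htq0 : 0 ≤ t / q := div_nonneg ht1.le hq.le
          constructor
          · rw [hz]
            apply Real.exp_le_exp.mpr
            nlinarith
          · calc exp (-(t/q) * σs i) ≤ exp 0 := Real.exp_le_exp.mpr (by nlinarith)
              _ = 1 := Real.exp_zero
        -- counting bounds
        have hNcntEq : ∀ w, (∑ i ∈ S, (Et i).indicator (fun _ => (1:ℝ)) w) = Ncnt (t, w) := by
          intro w
          rw [hNcnt]
          refine Finset.sum_congr rfl fun i _ => ?_
          by_cases hmem : w ∈ Et i
          · rw [Set.indicator_of_mem hmem,
              Set.indicator_of_mem (show (t, w) ∈ Win i from hmem)]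
          · rw [Set.indicator_of_notMem hmem,
              Set.indicator_of_notMem (show (t, w) ∉ Win i from hmem)]
        have hcount1 : ∑ i ∈ S, (restMeasure j) (Et i ∩ Dlt)
            ≤ ENNReal.ofReal (2*L) * (restMeasure j) Dlt := by
          refine sum_measure_inter_le _ _ _ (fun i _ => hEtMeas i) hDltMeas _ ?_
          intro w hw
          rw [indicator_sum_ofReal]
          apply ENNReal.ofReal_le_ofReal
          rw [hNcntEq w]
          exact le_of_lt hw
        have hcount2 : ENNReal.ofReal (m - 2*L) * (restMeasure j) Dlt
            ≤ ∑ i ∈ S, (restMeasure j) ((Et i)ᶜ ∩ Dlt) := by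
          refine le_sum_measure_inter _ _ _ (fun i _ => (hEtMeas i).compl) hDltMeas _ ?_
          intro w hw
          rw [indicator_sum_ofReal]
          apply ENNReal.ofReal_le_ofReal
          have hcompl : ∑ i ∈ S, ((Et i)ᶜ).indicator (fun _ => (1:ℝ)) w
              = m - ∑ i ∈ S, (Et i).indicator (fun _ => (1:ℝ)) w := by
            have hterm : ∀ i : Fin n, ((Et i)ᶜ).indicator (fun _ => (1:ℝ)) w
                = 1 - (Et i).indicator (fun _ => (1:ℝ)) w := by
              intro i
              by_cases hmem : w ∈ Et i <;> simp [hmem]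
            rw [Finset.sum_congr rfl (fun i _ => hterm i), Finset.sum_sub_distrib,
              Finset.sum_const, nsmul_eq_mul, mul_one, hmdef]
          rw [hcompl, hNcntEq w]
          have hwlt : Ncnt (t, w) < 2*L := hw
          linarith
        -- pass to real numbers
        have hfin : ∀ s : Set ({k : V // ¬ k = j} → ℝ), (restMeasure j) s ≠ ⊤ :=
          fun s => measure_ne_top _ s
        set d : ℝ := ((restMeasure j) Dlt).toReal with hd
        have hd0 : 0 ≤ d := ENNReal.toReal_nonneg
        set av : Fin n → ℝ := fun i => exp (-(t/q) * σs i) with hav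
        set X : ℝ := ∑ i ∈ S, ((restMeasure j) (Et i ∩ Dlt)).toReal with hX
        set Y : ℝ := ∑ i ∈ S, ((restMeasure j) (Et i ∩ Dltᶜ)).toReal with hY
        set A' : ℝ := ∑ i ∈ S, av i with hA'
        have hXY : X + Y = A' := by
          rw [hX, hY, hA', ← Finset.sum_add_distrib]
          refine Finset.sum_congr rfl fun i _ => ?_
          have hsplit := measure_inter_add_diff (μ := restMeasure j) (Et i) hDltMeas
          rw [Set.diff_eq] at hsplit
          have h2 : (((restMeasure j) (Et i ∩ Dlt))
              + ((restMeasure j) (Et i ∩ Dltᶜ))).toReal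
              = ((restMeasure j) (Et i)).toReal := by rw [hsplit]
          rw [ENNReal.toReal_add (hfin _) (hfin _)] at h2
          rw [h2, hEtVal i, ENNReal.toReal_ofReal (exp_pos _).le]
        have hXd : X ≤ 2*L*d := by
          have := ENNReal.toReal_mono (by
              exact ENNReal.mul_ne_top ENNReal.ofReal_ne_top (hfin _)) hcount1
          rw [ENNReal.toReal_mul, ENNReal.toReal_ofReal (by linarith : (0:ℝ) ≤ 2*L),
            ENNReal.toReal_sum (fun i _ => hfin _)] at this
          exact this
        have hdA : (m - 2*L) * d ≤ m - A' := by
          have hstep1 : ENNReal.ofReal (m - 2*L) * (restMeasure j) Dlt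
              ≤ ∑ i ∈ S, ((1:ℝ≥0∞) - ENNReal.ofReal (av i)) := by
            refine le_trans hcount2 (Finset.sum_le_sum fun i _ => ?_)
            have h1 : (restMeasure j) ((Et i)ᶜ ∩ Dlt) ≤ (restMeasure j) ((Et i)ᶜ) :=
              measure_mono Set.inter_subset_left
            have h2 : (restMeasure j) ((Et i)ᶜ) = 1 - ENNReal.ofReal (av i) := by
              rw [measure_compl (hEtMeas i) (hfin _), measure_univ, hEtVal i]
            rw [← h2]
            exact h1
          have hrhs : (∑ i ∈ S, ((1:ℝ≥0∞) - ENNReal.ofReal (av i))).toReal = m - A' := by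
            rw [ENNReal.toReal_sum (fun i _ => by
              exact ne_top_of_le_ne_top ENNReal.one_ne_top tsub_le_self)]
            have : ∀ i ∈ S, ((1:ℝ≥0∞) - ENNReal.ofReal (av i)).toReal = 1 - av i := by
              intro i _
              rw [ENNReal.toReal_sub_of_le (ENNReal.ofReal_le_one.mpr (havb i).2)
                ENNReal.one_ne_top, ENNReal.toReal_one,
                ENNReal.toReal_ofReal (exp_pos _).le]
            rw [Finset.sum_congr rfl this, Finset.sum_sub_distrib, Finset.sum_const,
              nsmul_eq_mul, mul_one, hmdef, hA']
          have := ENNReal.toReal_mono (by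
              refine ne_of_lt (lt_of_le_of_lt (Finset.sum_le_sum fun i _ =>
                (tsub_le_self : (1:ℝ≥0∞) - ENNReal.ofReal (av i) ≤ 1)) ?_)
              rw [Finset.sum_const]
              exact lt_top_iff_ne_top.mpr (by simp)) hstep1
          rw [hrhs, ENNReal.toReal_mul,
            ENNReal.toReal_ofReal (by linarith : (0:ℝ) ≤ m - 2*L)] at this
          exact this
        have hmz : m * z ≤ A' := by
          rw [hA', hmdef]
          calc (S.card : ℝ) * z = ∑ _i ∈ S, z := by
                rw [Finset.sum_const, nsmul_eq_mul]
            _ ≤ ∑ i ∈ S, av i := Finset.sum_le_sum fun i _ => (havb i).1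
        have hA'm : A' ≤ m := by
          rw [hA', hmdef]
          calc ∑ i ∈ S, av i ≤ ∑ _i ∈ S, (1:ℝ) := Finset.sum_le_sum fun i _ => (havb i).2
            _ = (S.card : ℝ) := by rw [Finset.sum_const, nsmul_eq_mul, mul_one]
        -- conclude the slice bound
        have hsum_eq : ∑ i ∈ S, (restMeasure j) (Prod.mk t ⁻¹' T i)
            = ENNReal.ofReal Y := by
          rw [Finset.sum_congr rfl (fun i _ => congrArg _ (hsliceEq i)), hY,
            ENNReal.ofReal_sum_of_nonneg (fun i _ => ENNReal.toReal_nonneg)]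
          exact Finset.sum_congr rfl fun i _ => (ENNReal.ofReal_toReal (hfin _)).symm
        rw [hsum_eq]
        apply ENNReal.ofReal_le_ofReal
        show m / (μ - 1) * (μ * z - 1) ≤ Y
        rw [div_mul_eq_mul_div, div_le_iff₀ hμ1]
        -- m * (μ * z - 1) ≤ Y * (μ - 1)
        have hkey1 : Y * (m - 2*L) ≥ m * (A' - 2*L) := by nlinarith
        have hkey2 : m * (A' - 2*L) * (μ - 1) ≥ m * (μ*z - 1) * (m - 2*L) := by
          nlinarith [mul_nonneg (mul_nonneg (sub_nonneg.mpr hmz) hμ1.le) hm0.le,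
            mul_nonneg (mul_nonneg (sub_nonneg.mpr hz1)
              (by linarith : (0:ℝ) ≤ m - 2*L*μ)) hm0.le]
        nlinarith [mul_le_mul_of_nonneg_right hkey1 hμ1.le]
      -- integrate the slice bound
      calc ENNReal.ofReal (m * q * (μ - 1) / (2 * μ))
          ≤ ∫⁻ t in Ioc (0:ℝ) c, ENNReal.ofReal (gbar t) ∂(expMeasure 1) := by
            have hgcont : Continuous gbar := by
              rw [hgbar]
              fun_prop
            have hgbar_nonneg : ∀ t ∈ Icc (0:ℝ) c, 0 ≤ gbar t := by
              rintro t ⟨ht0, htc⟩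
              have htq : t/q ≤ Real.log μ := by
                rw [div_le_iff₀ hq]; rw [hcdef] at htc; linarith
              have hexp : exp (-(Real.log μ)) ≤ exp (-(t/q)) :=
                Real.exp_le_exp.mpr (by linarith)
              rw [Real.exp_neg, Real.exp_log hμ0] at hexp
              have h1 : 1 ≤ μ * exp (-(t/q)) := by
                have h3 := mul_le_mul_of_nonneg_left hexp hμ0.le
                rw [mul_inv_cancel₀ (ne_of_gt hμ0)] at h3
                exact h3
              have h2 : (0:ℝ) ≤ m / (μ-1) := by positivity
              rw [hgbar]
              simp only
              nlinarith
            have hmono : ∀ t ∈ Icc (0:ℝ) c, exp (-(t/q)) * gbar t ≤ exp (-t) * gbar t := by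
              intro t ht
              have h1 : exp (-(t/q)) ≤ exp (-t) := by
                apply Real.exp_le_exp.mpr
                have h2 : t * q ≤ t := by nlinarith [ht.1]
                have h3 : t ≤ t / q := (le_div_iff₀ hq).mpr h2
                linarith
              exact mul_le_mul_of_nonneg_right h1 (hgbar_nonneg t ht)
            have hint1 : IntervalIntegrable (fun t => exp (-(t/q)) * gbar t) volume 0 c :=
              (Continuous.mul (by fun_prop) hgcont).intervalIntegrable 0 c
            have hint2 : IntervalIntegrable (fun t => exp (-t) * gbar t) volume 0 c :=
              (Continuous.mul (by fun_prop) hgcont).intervalIntegrable 0 c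
            have heval : ∫ t in (0:ℝ)..c, exp (-(t/q)) * gbar t
                = m * q * (μ-1) / (2*μ) := by
              have hrw : ∀ t : ℝ, exp (-(t/q)) * gbar t
                  = (m/(μ-1)) * (μ * exp (-((2/q) * t)) - exp (-((1/q) * t))) := by
                intro t
                rw [hgbar]
                simp only
                have e2 : exp (-((2/q) * t)) = exp (-(t/q)) * exp (-(t/q)) := by
                  rw [← Real.exp_add]; congr 1; field_simp; ring
                have e1 : exp (-((1/q) * t)) = exp (-(t/q)) := by
                  congr 1; field_simp
                rw [e2, e1]; ring
              simp_rw [hrw]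
              rw [intervalIntegral.integral_const_mul, intervalIntegral.integral_sub
                ((by fun_prop : Continuous fun t : ℝ => μ * exp (-((2/q) * t))).intervalIntegrable 0 c)
                ((by fun_prop : Continuous fun t : ℝ => exp (-((1/q) * t))).intervalIntegrable 0 c),
                intervalIntegral.integral_const_mul,
                integral_exp_neg_mul _ _ (div_ne_zero two_ne_zero hq.ne'),
                integral_exp_neg_mul _ _ (one_div_ne_zero hq.ne')]
              have hc2 : (2/q) * c = 2 * Real.log μ := by
                rw [hcdef]; field_simp
              have hc1 : (1/q) * c = Real.log μ := by
                rw [hcdef]; field_simp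
              rw [hc2, hc1]
              have hμinv : exp (-(Real.log μ)) = μ⁻¹ := by
                rw [Real.exp_neg, Real.exp_log hμ0]
              have hμinv2 : exp (-(2 * Real.log μ)) = μ⁻¹ * μ⁻¹ := by
                rw [show -(2 * Real.log μ) = -(Real.log μ) + -(Real.log μ) by ring,
                  Real.exp_add, hμinv]
              rw [hμinv, hμinv2]
              field_simp
              ring
            have hIntOn : IntegrableOn (fun t => exp (-t) * gbar t) (Ioc (0:ℝ) c) volume :=
              ((Continuous.mul (by fun_prop) hgcont).integrableOn_Icc).mono_set
                Ioc_subset_Icc_self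
            have hae : 0 ≤ᶠ[ae (volume.restrict (Ioc (0:ℝ) c))]
                (fun t => exp (-t) * gbar t) := by
              rw [Filter.EventuallyLE, ae_restrict_iff' measurableSet_Ioc]
              exact Filter.Eventually.of_forall fun t ht =>
                mul_nonneg (exp_pos _).le (hgbar_nonneg t ⟨ht.1.le, ht.2⟩)
            calc ENNReal.ofReal (m * q * (μ - 1) / (2 * μ))
                = ENNReal.ofReal (∫ t in (0:ℝ)..c, exp (-(t/q)) * gbar t) := by rw [heval]
              _ ≤ ENNReal.ofReal (∫ t in (0:ℝ)..c, exp (-t) * gbar t) :=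
                  ENNReal.ofReal_le_ofReal
                    (intervalIntegral.integral_mono_on hc.le hint1 hint2 hmono)
              _ = ENNReal.ofReal (∫ t in Ioc (0:ℝ) c, exp (-t) * gbar t ∂volume) := by
                  rw [intervalIntegral.integral_of_le hc.le]
              _ = ∫⁻ t in Ioc (0:ℝ) c, ENNReal.ofReal (exp (-t) * gbar t) ∂volume :=
                  ofReal_integral_eq_lintegral_ofReal hIntOn hae
              _ = ∫⁻ t in Ioc (0:ℝ) c, exponentialPDF 1 t * ENNReal.ofReal (gbar t)
                    ∂volume := by
                  refine setLIntegral_congr_fun measurableSet_Ioc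
                    (fun t ht => ?_)
                  rw [exponentialPDF_of_nonneg ht.1.le,
                    ← ENNReal.ofReal_mul (by positivity)]
                  congr 1
                  norm_num
              _ = ∫⁻ t in Ioc (0:ℝ) c, ENNReal.ofReal (gbar t) ∂(expMeasure 1) := by
                  rw [expMeasure_eq_withDensity, restrict_withDensity measurableSet_Ioc,
                    lintegral_withDensity_eq_lintegral_mul _ measurable_exponentialPDF
                      (hgcont.measurable.ennreal_ofReal)]
                  rfl

        _ = ∫⁻ t, (Ioc (0:ℝ) c).indicator (fun s => ENNReal.ofReal (gbar s)) t
              ∂(expMeasure 1) := (lintegral_indicator measurableSet_Ioc _).symm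
        _ ≤ ∫⁻ t, (∑ i ∈ S, (restMeasure j) (Prod.mk t ⁻¹' T i)) ∂(expMeasure 1) :=
            lintegral_mono hslice
    have hinv : (n : ℝ≥0∞)⁻¹ = ENNReal.ofReal ((n:ℝ)⁻¹) := by
      rw [ENNReal.ofReal_inv_of_pos (by exact_mod_cast hn), ENNReal.ofReal_natCast]
    refine le_trans ?_ (mul_le_mul_left hmain _)
    rw [hinv, ← ENNReal.ofReal_mul (by positivity)]
    apply ENNReal.ofReal_le_ofReal
    have hlog : Real.log μ ≤ μ - 1 := by
      have := Real.log_le_sub_one_of_pos hμ0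
      linarith
    have hn0 : (0:ℝ) < n := by exact_mod_cast hn
    rw [show m * q * (μ - 1) / (2 * μ) * (n:ℝ)⁻¹ = (μ - 1) / (2 * μ) * (m / n) * q by
      field_simp]
    have h1 : Real.log μ / (2 * μ) ≤ (μ - 1) / (2 * μ) :=
      by gcongr
    have h2 : (0:ℝ) ≤ m / n * q := by positivity
    calc Real.log μ / (2 * μ) * (m / n) * q
        = Real.log μ / (2 * μ) * (m / n * q) := by ring
      _ ≤ (μ - 1) / (2 * μ) * (m / n * q) := mul_le_mul_of_nonneg_right h1 h2
      _ = (μ - 1) / (2 * μ) * (m / n) * q := by ring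
  · -- Part (2)
    intro j
    set φ : (V → ℝ) → ℝ × ({k : V // ¬ k = j} → ℝ) :=
      fun u => (u j, fun k => u k.1) with hφ
    set T2 : Fin n → Set (ℝ × ({k : V // ¬ k = j} → ℝ)) :=
      fun i => {x | 0 < x.1} ∩ ⋂ k : {k : V // ¬ k = j},
        {x | p i k.1 * x.1 ≤ p i j * x.2 k} with hT2
    have hT2meas : ∀ i, MeasurableSet (T2 i) := by
      intro i
      refine (measurableSet_lt measurable_const measurable_fst).inter
        (MeasurableSet.iInter fun k => ?_)
      exact measurableSet_le (measurable_fst.const_mul _)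
        (((measurable_pi_apply k).comp measurable_snd).const_mul _)
    -- bad set of nonpositive coordinates
    set Zu : Set (V → ℝ) := ⋃ k : V, {u | u k ≤ 0} with hZu
    have hZu0 : sharedMeasure V Zu = 0 := by
      refine measure_iUnion_null fun k => ?_
      have hset : {u : V → ℝ | u k ≤ 0}
          = Set.pi univ (fun k' => if k' = k then Iic 0 else univ) := by
        ext u
        simp only [Set.mem_pi, Set.mem_univ, forall_const, Set.mem_setOf_eq]
        constructor
        · intro h k'
          by_cases hk : k' = k
          · subst hk; simp [h]
          · simp [hk]
        · intro h
          have := h k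
          simpa using this
      rw [hset, sharedMeasure, Measure.pi_pi]
      refine Finset.prod_eq_zero (Finset.mem_univ k) ?_
      simp [expMeasure_Iic_zero]
    -- inclusion of the event
    have hsub : {x : (V → ℝ) × (Fin n) × Ω |
        (if 2 * L ≤ ((freq p x.1 (coordSample (p x.2.1) x.1) : ℝ)) then
            some (coordSample (p x.2.1) x.1)
          else rule (freq p x.1) (coordSample (p x.2.1) x.1) x.2.2) = some j}
        ⊆ (Zu ×ˢ (univ : Set (Fin n × Ω)))
          ∪ ⋃ i ∈ (Finset.univ : Finset (Fin n)), ((φ ⁻¹' T2 i) ×ˢ ({i} ×ˢ (univ : Set Ω))) := by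
      rintro ⟨u, i, ω⟩ hx
      simp only [Set.mem_setOf_eq] at hx
      by_cases hz : u ∈ Zu
      · exact Or.inl ⟨hz, trivial⟩
      · have hpos : ∀ k, 0 < u k := by
          intro k
          by_contra hk
          exact hz (Set.mem_iUnion.mpr ⟨k, not_lt.mp hk⟩)
        have hcs : coordSample (p i) u = j := by
          by_cases hif : 2 * L ≤ ((freq p u (coordSample (p i) u) : ℝ))
          · rw [if_pos hif] at hx; exact Option.some_injective _ hx
          · rw [if_neg hif] at hx
            rcases hrule (freq p u) (coordSample (p i) u) ω with h1 | h1
            · rw [h1] at hx; exact Option.some_injective _ hx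
            · rw [h1] at hx; exact absurd hx (by simp)
        refine Or.inr (Set.mem_biUnion (Finset.mem_univ i) ?_)
        refine ⟨?_, rfl, trivial⟩
        refine ⟨hpos j, Set.mem_iInter.mpr fun k => ?_⟩
        have hspec := coordSample_spec (p i) u k.1
        rw [hcs] at hspec
        have := (div_le_div_iff₀ (hpos k.1) (hpos j)).mp hspec
        simpa [Set.mem_setOf_eq] using this
    -- measure bound for each T2 i
    have hT2bound : ∀ i, ((expMeasure 1).prod (restMeasure j)) (T2 i)
        ≤ ENNReal.ofReal (p i j) := by
      intro i
      by_cases hpj : 0 < p i j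
      · set b : ℝ := (1 - p i j) / p i j with hb
        have hb0 : 0 ≤ b := by
          apply div_nonneg _ hpj.le
          have hle : p i j ≤ 1 := by
            have := Finset.single_le_sum (f := p i) (fun k _ => (hp i).1 k) (Finset.mem_univ j)
            linarith [(hp i).2]
          linarith
        have hpjle : p i j ≤ 1 := by
          have := Finset.single_le_sum (f := p i) (fun k _ => (hp i).1 k) (Finset.mem_univ j)
          linarith [(hp i).2]
        have hsumK : ∑ k : {k : V // ¬ k = j}, p i k.1 = 1 - p i j := by
          rw [← Finset.sum_subtype (Finset.univ.erase j)
            (by intro k; simp [Finset.mem_erase]) (fun k => p i k)]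
          have := Finset.add_sum_erase Finset.univ (p i) (Finset.mem_univ j)
          rw [(hp i).2] at this
          linarith
        calc ((expMeasure 1).prod (restMeasure j)) (T2 i)
            = ∫⁻ t, (restMeasure j) (Prod.mk t ⁻¹' T2 i) ∂(expMeasure 1) :=
              Measure.prod_apply (hT2meas i)
          _ ≤ ∫⁻ t, (Ioi (0:ℝ)).indicator
                (fun s => ENNReal.ofReal (exp (-((1 + b) * s)) / exp (-s))) t
                ∂(expMeasure 1) := by
              refine lintegral_mono fun t => ?_
              by_cases ht : (0:ℝ) < t
              · rw [Set.indicator_of_mem (s := Ioi (0:ℝ)) ht]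
                have hsub2 : (Prod.mk t ⁻¹' T2 i)
                    ⊆ Set.pi univ (fun k : {k : V // ¬ k = j} =>
                        Ici (p i k.1 * t / p i j)) := by
                  intro w hw
                  rw [Set.mem_pi]
                  intro k _
                  have h2 := Set.mem_iInter.mp hw.2 k
                  simp only [Set.mem_setOf_eq] at h2
                  rw [Set.mem_Ici, div_le_iff₀ hpj]
                  linarith [h2]
                refine le_trans (measure_mono hsub2) ?_
                rw [Measure.pi_pi]
                calc ∏ k : {k : V // ¬ k = j}, expMeasure 1 (Ici (p i k.1 * t / p i j))
                    ≤ ∏ k : {k : V // ¬ k = j},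
                        ENNReal.ofReal (exp (-(p i k.1 * t / p i j))) :=
                      Finset.prod_le_prod' fun k _ => expMeasure_Ici
                        (div_nonneg (mul_nonneg ((hp i).1 _) ht.le) hpj.le) 
                  _ = ENNReal.ofReal (exp (-((1 + b) * t)) / exp (-t)) := by
                      rw [← ENNReal.ofReal_prod_of_nonneg
                        (fun k _ => (exp_pos _).le), ← Real.exp_sum]
                      congr 1
                      rw [← Real.exp_sub]
                      congr 1
                      have : ∑ k : {k : V // ¬ k = j}, -(p i k.1 * t / p i j)
                          = -(t / p i j) * ∑ k : {k : V // ¬ k = j}, p i k.1 := by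
                        rw [Finset.mul_sum]
                        exact Finset.sum_congr rfl fun k _ => by ring
                      rw [this, hsumK, hb]
                      field_simp
                      ring
              · rw [Set.indicator_of_notMem (s := Ioi (0:ℝ)) ht]
                have hempty : (Prod.mk t ⁻¹' T2 i) = ∅ := by
                  ext w
                  simp only [Set.mem_preimage, hT2, Set.mem_inter_iff, Set.mem_setOf_eq,
                    Set.mem_empty_iff_false, iff_false, not_and]
                  intro h0
                  exact absurd h0 ht
                rw [hempty, measure_empty]
          _ = ∫⁻ t in Ioi (0:ℝ), ENNReal.ofReal (exp (-((1 + b) * t)) / exp (-t))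
                ∂(expMeasure 1) := lintegral_indicator measurableSet_Ioi _
          _ = ∫⁻ t in Ioi (0:ℝ), exponentialPDF 1 t
                * ENNReal.ofReal (exp (-((1 + b) * t)) / exp (-t)) ∂volume := by
              rw [expMeasure_eq_withDensity, restrict_withDensity measurableSet_Ioi,
                lintegral_withDensity_eq_lintegral_mul _ measurable_exponentialPDF
                  (by fun_prop)]
              rfl
          _ = ∫⁻ t in Ioi (0:ℝ), ENNReal.ofReal (exp (-((1 + b) * t))) ∂volume := by
              refine setLIntegral_congr_fun measurableSet_Ioi
                (fun t ht => ?_)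
              rw [exponentialPDF_of_nonneg (le_of_lt ht),
                ← ENNReal.ofReal_mul (by positivity)]
              congr 1
              rw [one_mul]
              field_simp
          _ = ENNReal.ofReal (∫ t in Ioi (0:ℝ), exp (-((1 + b) * t)) ∂volume) := by
              have h1b : (0:ℝ) < 1 + b := by linarith
              have hint : IntegrableOn (fun t : ℝ => exp (-((1 + b) * t))) (Ioi (0:ℝ)) volume := by
                have h := exp_neg_integrableOn_Ioi 0 h1b
                apply h.congr_fun _ measurableSet_Ioi
                intro t _
                ring_nf
              rw [← ofReal_integral_eq_lintegral_ofReal hint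
                (Filter.Eventually.of_forall fun x => (exp_pos _).le)]
          _ ≤ ENNReal.ofReal (p i j) := by
              apply ENNReal.ofReal_le_ofReal
              have h1b : (0:ℝ) < 1 + b := by linarith
              have heval := integral_comp_mul_left_Ioi (fun y => exp (-y)) 0 h1b
              simp only [mul_zero, integral_exp_neg_Ioi_zero, smul_eq_mul, mul_one] at heval
              rw [heval]
              have : 1 + b = (p i j)⁻¹ := by
                rw [hb]
                field_simp
                ring
              rw [this, inv_inv]
      · -- p i j = 0 : the set T2 i is empty
        have hpj0 : p i j = 0 := le_antisymm (not_lt.mp hpj) ((hp i).1 j)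
        have hk0 : ∃ k : V, ¬ k = j ∧ 0 < p i k := by
          by_contra hcon
          push_neg at hcon
          have hz : ∀ k, k ≠ j → p i k = 0 := fun k hk =>
            le_antisymm (hcon k hk) ((hp i).1 k)
          have : ∑ k, p i k = p i j := Finset.sum_eq_single_of_mem j (Finset.mem_univ j)
            (fun k _ hk => hz k hk)
          rw [(hp i).2, hpj0] at this
          norm_num at this
        obtain ⟨k0, hk0j, hk0pos⟩ := hk0
        have : T2 i = ∅ := by
          ext x
          simp only [hT2, Set.mem_inter_iff, Set.mem_iInter, Set.mem_setOf_eq,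
            Set.mem_empty_iff_false, iff_false, not_and]
          intro hx1 hall
          have := hall ⟨k0, hk0j⟩
          rw [hpj0] at this
          nlinarith
        rw [this]
        simp
    -- put it together
    calc ((sharedMeasure V).prod τ) _
        ≤ ((sharedMeasure V).prod τ) ((Zu ×ˢ (univ : Set (Fin n × Ω)))
          ∪ ⋃ i ∈ (Finset.univ : Finset (Fin n)),
              ((φ ⁻¹' T2 i) ×ˢ ({i} ×ˢ (univ : Set Ω)))) := measure_mono hsub
      _ ≤ ((sharedMeasure V).prod τ) (Zu ×ˢ (univ : Set (Fin n × Ω)))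
          + ((sharedMeasure V).prod τ) (⋃ i ∈ (Finset.univ : Finset (Fin n)),
              ((φ ⁻¹' T2 i) ×ˢ ({i} ×ˢ (univ : Set Ω)))) := measure_union_le _ _
      _ ≤ 0 + ∑ i ∈ (Finset.univ : Finset (Fin n)),
            ((sharedMeasure V).prod τ) ((φ ⁻¹' T2 i) ×ˢ ({i} ×ˢ (univ : Set Ω))) := by
          gcongr
          · rw [Measure.prod_prod, hZu0, zero_mul]
          · exact measure_biUnion_finset_le _ _
      _ ≤ ENNReal.ofReal (1 / n * ∑ i, p i j) := by
          rw [zero_add]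
          have hstep : ∀ i : Fin n, ((sharedMeasure V).prod τ)
              ((φ ⁻¹' T2 i) ×ˢ ({i} ×ˢ (univ : Set Ω)))
              ≤ ENNReal.ofReal (p i j) * (n : ℝ≥0∞)⁻¹ := by
            intro i
            rw [Measure.prod_prod, hτsingle i]
            gcongr
            rw [(measurePreserving_split j).measure_preimage (hT2meas i).nullMeasurableSet]
            exact hT2bound i
          refine le_trans (Finset.sum_le_sum fun i _ => hstep i) ?_
          have hinv : (n : ℝ≥0∞)⁻¹ = ENNReal.ofReal ((n:ℝ)⁻¹) := by
            rw [ENNReal.ofReal_inv_of_pos (by exact_mod_cast hn), ENNReal.ofReal_natCast]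
          rw [← Finset.sum_mul, hinv, ← ENNReal.ofReal_sum_of_nonneg
            (fun i _ => (hp i).1 j), ← ENNReal.ofReal_mul
            (Finset.sum_nonneg fun i _ => (hp i).1 j)]
          apply le_of_eq
          congr 1
          ring
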